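/- Let n be a positive integer and let X be an S(2n−1)-space. Then for every subset A of X, the cardinality of the θ₀ⁿ-closure of A satisfies |cl_{θ₀ⁿ}(A)| ≤ |A|^{κ_{θ₀(n)}(X)} (cardinal exponentiation). -/

import Mathlib

open Cardinal Set

universe u

/-- The θⁿ-closure: `x ∈ thetaCl n M` iff there is NO chain of open sets
`U 0 ⊆ U 1 ⊆ ... ⊆ U (n-1)` with `x ∈ U 0`, `closure (U i) ⊆ U (i+1)` for `i+1 < n`,
and `closure (U (n-1)) ∩ M = ∅`. -/
def thetaCl (n : ℕ) {X : Type u} [TopologicalSpace X] (M : Set X) : Set X :=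
  {x | ¬ ∃ U : ℕ → Set X, (∀ i, i < n → IsOpen (U i)) ∧ x ∈ U 0 ∧
    (∀ i, i + 1 < n → closure (U i) ⊆ U (i + 1)) ∧
    closure (U (n - 1)) ∩ M = ∅}

/-- The θ₀ⁿ-closure: as `thetaCl` but the last set itself misses `M`. -/
def theta0Cl (n : ℕ) {X : Type u} [TopologicalSpace X] (M : Set X) : Set X :=
  {x | ¬ ∃ U : ℕ → Set X, (∀ i, i < n → IsOpen (U i)) ∧ x ∈ U 0 ∧
    (∀ i, i + 1 < n → closure (U i) ⊆ U (i + 1)) ∧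
    U (n - 1) ∩ M = ∅}

/-- `X` is an S(m)-space: any two distinct points are S(m)-separated. -/
def SSpace (m : ℕ) (X : Type u) [TopologicalSpace X] : Prop :=
  ∀ x y : X, x ≠ y → x ∉ thetaCl m ({y} : Set X)

/-- `U` is an n-hull of `A`: there are open sets `V 0, ..., V (n-1) = U` with
`A ⊆ V 0` and `closure (V i) ⊆ V (i+1)` for `i+1 < n`. -/
def IsNHull (n : ℕ) {X : Type u} [TopologicalSpace X] (A U : Set X) : Prop :=
  ∃ V : ℕ → Set X, (∀ i, i < n → IsOpen (V i)) ∧ A ⊆ V 0 ∧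
    (∀ i, i + 1 < n → closure (V i) ⊆ V (i + 1)) ∧ U = V (n - 1)

/-- A closed n-hull of `A` is the closure of an n-hull of `A`. -/
def IsClosedNHull (n : ℕ) {X : Type u} [TopologicalSpace X] (A W : Set X) : Prop :=
  ∃ U : Set X, IsNHull n A U ∧ W = closure U

/-- `κ_{θ(n)}(X)`: the smallest infinite cardinal `κ` such that every point `x` has a
family of at most `κ` closed n-hulls of `{x}` which is cofinal (under `⊇`) in all
closed n-hulls of `{x}`. -/
noncomputable def kappaTheta (n : ℕ) (X : Type u) [TopologicalSpace X] : Cardinal.{u} :=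
  sInf {κ : Cardinal.{u} | Cardinal.aleph0 ≤ κ ∧ ∀ x : X, ∃ 𝒱 : Set (Set X),
    #𝒱 ≤ κ ∧ (∀ W ∈ 𝒱, IsClosedNHull n ({x} : Set X) W) ∧
    ∀ W : Set X, IsClosedNHull n ({x} : Set X) W → ∃ B ∈ 𝒱, B ⊆ W}

/-- `κ_{θ₀(n)}(X)`: as `kappaTheta` but with (open) n-hulls of `{x}`. -/
noncomputable def kappaTheta0 (n : ℕ) (X : Type u) [TopologicalSpace X] : Cardinal.{u} :=
  sInf {κ : Cardinal.{u} | Cardinal.aleph0 ≤ κ ∧ ∀ x : X, ∃ 𝒱 : Set (Set X),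
    #𝒱 ≤ κ ∧ (∀ W ∈ 𝒱, IsNHull n ({x} : Set X) W) ∧
    ∀ W : Set X, IsNHull n ({x} : Set X) W → ∃ B ∈ 𝒱, B ⊆ W}

/-- `sL_{θ(n)}(X)`: the smallest infinite cardinal `κ` such that for every `A ⊆ X` and
every family `𝒰` of open sets with `thetaCl n A ⊆ ⋃₀ 𝒰` there is `𝒱 ⊆ 𝒰` with
`#𝒱 ≤ κ` and `A ⊆ closure (⋃₀ 𝒱)`. -/
noncomputable def sLTheta (n : ℕ) (X : Type u) [TopologicalSpace X] : Cardinal.{u} :=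
  sInf {κ : Cardinal.{u} | Cardinal.aleph0 ≤ κ ∧ ∀ (A : Set X) (𝒰 : Set (Set X)),
    (∀ U ∈ 𝒰, IsOpen U) → thetaCl n A ⊆ ⋃₀ 𝒰 →
    ∃ 𝒱 ⊆ 𝒰, #𝒱 ≤ κ ∧ A ⊆ closure (⋃₀ 𝒱)}

/-- `sL_{θ₀(n)}(X)`: the smallest infinite cardinal `κ` such that for every θ₀ⁿ-closed
`A ⊆ X` and every family `𝒰` of open sets covering `A` there is `𝒱 ⊆ 𝒰` with
`#𝒱 ≤ κ` and `A ⊆ closure (⋃₀ 𝒱)`. -/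
noncomputable def sLTheta0 (n : ℕ) (X : Type u) [TopologicalSpace X] : Cardinal.{u} :=
  sInf {κ : Cardinal.{u} | Cardinal.aleph0 ≤ κ ∧ ∀ (A : Set X) (𝒰 : Set (Set X)),
    theta0Cl n A = A → (∀ U ∈ 𝒰, IsOpen U) → A ⊆ ⋃₀ 𝒰 →
    ∃ 𝒱 ⊆ 𝒰, #𝒱 ≤ κ ∧ A ⊆ closure (⋃₀ 𝒱)}

/-- `sL_{s(n)}(X)`: the smallest infinite cardinal `κ` such that for every θⁿ-closed
`A ⊆ X` and every S(n)-cover `𝒰` with respect to `A` (i.e. `A` is covered by the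
θⁿ-interiors of members of `𝒰`) there is `𝒱 ⊆ 𝒰` with `#𝒱 ≤ κ` and
`A ⊆ closure (⋃₀ 𝒱)`. -/
noncomputable def sLs (n : ℕ) (X : Type u) [TopologicalSpace X] : Cardinal.{u} :=
  sInf {κ : Cardinal.{u} | Cardinal.aleph0 ≤ κ ∧ ∀ (A : Set X) (𝒰 : Set (Set X)),
    thetaCl n A = A → (∀ U ∈ 𝒰, IsOpen U) →
    (A ⊆ ⋃ U ∈ 𝒰, (thetaCl n Uᶜ)ᶜ) →
    ∃ 𝒱 ⊆ 𝒰, #𝒱 ≤ κ ∧ A ⊆ closure (⋃₀ 𝒱)}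

/-- `qM_{θ(n)}(X)`: the θ(n)-quasi-Menger number. -/
noncomputable def qMTheta (n : ℕ) (X : Type u) [TopologicalSpace X] : Cardinal.{u} :=
  sInf {κ : Cardinal.{u} | Cardinal.aleph0 ≤ κ ∧ ∀ A : Set X, IsClosed A →
    ∀ 𝒰 : κ.out → Set (Set X), (∀ α, ∀ U ∈ 𝒰 α, IsOpen U) →
    A ⊆ ⋃ α, ⋃₀ (𝒰 α) →
    ∃ 𝒱 : κ.out → Set (Set X), (∀ α, 𝒱 α ⊆ 𝒰 α ∧ (𝒱 α).Finite) ∧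
      A ⊆ ⋃ α, thetaCl n (⋃₀ (𝒱 α))}

/-- `qM_{θ₀(n)}(X)`: the θ₀(n)-quasi-Menger number. -/
noncomputable def qMTheta0 (n : ℕ) (X : Type u) [TopologicalSpace X] : Cardinal.{u} :=
  sInf {κ : Cardinal.{u} | Cardinal.aleph0 ≤ κ ∧ ∀ A : Set X, IsClosed A →
    ∀ 𝒰 : κ.out → Set (Set X), (∀ α, ∀ U ∈ 𝒰 α, IsOpen U) →
    A ⊆ ⋃ α, ⋃₀ (𝒰 α) →
    ∃ 𝒱 : κ.out → Set (Set X), (∀ α, 𝒱 α ⊆ 𝒰 α ∧ (𝒱 α).Finite) ∧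
      A ⊆ ⋃ α, theta0Cl n (⋃₀ (𝒱 α))}

lemma isNHull_univ {X : Type u} [TopologicalSpace X] (n : ℕ) (A : Set X) :
    IsNHull n A univ :=
  ⟨fun _ => univ, fun _ _ => isOpen_univ, subset_univ _, fun _ _ => by simp, rfl⟩

lemma isNHull_inter {X : Type u} [TopologicalSpace X] {n : ℕ} {A U U' : Set X}
    (h : IsNHull n A U) (h' : IsNHull n A U') : IsNHull n A (U ∩ U') := by
  obtain ⟨V, hVo, hAV, hVc, hVe⟩ := h
  obtain ⟨W, hWo, hAW, hWc, hWe⟩ := h'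
  refine ⟨fun i => V i ∩ W i, fun i hi => (hVo i hi).inter (hWo i hi),
    subset_inter hAV hAW, fun i hi => ?_, by rw [hVe, hWe]⟩
  exact (closure_inter_subset_inter_closure _ _).trans
    (inter_subset_inter (hVc i hi) (hWc i hi))

lemma theta0_hull_nonempty {X : Type u} [TopologicalSpace X] {n : ℕ} {A : Set X} {x : X}
    (hx : x ∈ theta0Cl n A) {U : Set X} (hU : IsNHull n ({x} : Set X) U) :
    (U ∩ A).Nonempty := by
  rw [Set.nonempty_iff_ne_empty]
  intro hcon
  obtain ⟨V, hVo, hAV, hVc, hVe⟩ := hU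
  exact hx ⟨V, hVo, hAV rfl, hVc, by rw [← hVe]; exact hcon⟩

lemma disjoint_hulls {X : Type u} [TopologicalSpace X] {n : ℕ} (hn : 0 < n)
    (hX : SSpace (2 * n - 1) X) {x y : X} (hxy : x ≠ y) :
    ∃ Hx Hy : Set X, IsNHull n ({x} : Set X) Hx ∧ IsNHull n ({y} : Set X) Hy ∧
      Hx ∩ Hy = ∅ := by
  have h := hX x y hxy
  rw [thetaCl, mem_setOf_eq, not_not] at h
  obtain ⟨U, hop, hx0, hch, hlast⟩ := h
  rw [show 2*n-1-1 = 2*n-2 from by omega] at hlast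
  refine ⟨U (n-1), (closure (U (n-1)))ᶜ, ?_, ?_, ?_⟩
  · exact ⟨U, fun i hi => hop i (by omega), singleton_subset_iff.2 hx0,
      fun i hi => hch i (by omega), rfl⟩
  · refine ⟨fun i => (closure (U (2*n-2-i)))ᶜ,
      fun i _ => isClosed_closure.isOpen_compl, ?_, ?_, ?_⟩
    · intro z hz
      rw [mem_singleton_iff] at hz; subst hz
      intro hcon
      have : z ∈ closure (U (2*n-2)) ∩ ({z} : Set X) :=
        ⟨by simpa using hcon, rfl⟩
      rw [hlast] at this
      exact this
    · intro i hi
      have e1 : 2*n-2-(i+1)+1 = 2*n-2-i := by omega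
      have step : closure (U (2*n-2-(i+1))) ⊆ U (2*n-2-i) := by
        have := hch (2*n-2-(i+1)) (by omega)
        rwa [e1] at this
      refine (closure_minimal (compl_subset_compl.2 subset_closure)
        (hop _ (by omega)).isClosed_compl).trans ?_
      exact compl_subset_compl.2 step
    · exact congrArg (fun j => (closure (U j))ᶜ) (by omega : n-1 = 2*n-2-(n-1))
  · ext p
    simp only [mem_inter_iff, mem_compl_iff, mem_empty_iff_false, iff_false, not_and,
      not_not]
    exact fun hp => subset_closure hp

theorem stmt5 (n : ℕ) (hn : 0 < n) (X : Type u) [TopologicalSpace X]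
    (hX : SSpace (2 * n - 1) X) (A : Set X) :
    #(theta0Cl n A) ≤ #A ^ kappaTheta0 n X := by
  classical
  set κ := kappaTheta0 n X with hκdef
  -- the defining set of `kappaTheta0` is nonempty, so its infimum is a member
  have hne : {κ' : Cardinal.{u} | Cardinal.aleph0 ≤ κ' ∧ ∀ x : X, ∃ 𝒱 : Set (Set X),
      #𝒱 ≤ κ' ∧ (∀ W ∈ 𝒱, IsNHull n ({x} : Set X) W) ∧
      ∀ W : Set X, IsNHull n ({x} : Set X) W → ∃ B ∈ 𝒱, B ⊆ W}.Nonempty := by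
    refine ⟨max ℵ₀ (2 ^ #X), le_max_left _ _, fun x =>
      ⟨{U | IsNHull n ({x} : Set X) U}, ?_, fun W hW => hW,
        fun W hW => ⟨W, hW, subset_rfl⟩⟩⟩
    calc #{U | IsNHull n ({x} : Set X) U} ≤ #(Set X) := mk_set_le _
      _ = 2 ^ #X := mk_set
      _ ≤ max ℵ₀ (2 ^ #X) := le_max_right _ _
  have hmem : κ ∈ _ := csInf_mem hne
  obtain ⟨hκinf, hfam⟩ := hmem
  choose 𝒱 h𝒱card h𝒱hull h𝒱cof using hfam
  have hVne : ∀ x : X, Nonempty ↥(𝒱 x) := by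
    intro x
    obtain ⟨B, hB, -⟩ := h𝒱cof x univ (isNHull_univ n _)
    exact ⟨⟨B, hB⟩⟩
  have hκout : Nonempty κ.out := by
    rw [← Cardinal.mk_ne_zero_iff, Cardinal.mk_out]
    intro h
    have h0 := hκinf
    rw [h] at h0
    exact Cardinal.aleph0_ne_zero (le_antisymm h0 zero_le)
  have hg : ∀ x : X, ∃ g : κ.out → ↥(𝒱 x), Function.Surjective g := by
    intro x
    have hcard : #↥(𝒱 x) ≤ #(κ.out) := by rw [Cardinal.mk_out]; exact h𝒱card x
    obtain ⟨f⟩ := Cardinal.le_def _ _ |>.mp hcard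
    have := hVne x
    exact ⟨Function.invFun f, Function.invFun_surjective f.injective⟩
  choose g hgsurj using hg
  have hpt : ∀ (x : ↥(theta0Cl n A)) (α β : κ.out),
      (((g x.1 α : Set X) ∩ (g x.1 β : Set X)) ∩ A).Nonempty := by
    intro x α β
    have h1 : IsNHull n ({x.1} : Set X) (g x.1 α : Set X) :=
      h𝒱hull x.1 _ (g x.1 α).2
    have h2 : IsNHull n ({x.1} : Set X) (g x.1 β : Set X) :=
      h𝒱hull x.1 _ (g x.1 β).2
    exact theta0_hull_nonempty x.2 (isNHull_inter h1 h2)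
  choose F hF using hpt
  have hinj : Function.Injective
      (fun (x : ↥(theta0Cl n A)) => fun (α β : κ.out) =>
        (⟨F x α β, (hF x α β).2⟩ : ↥A)) := by
    intro x y hxyF
    by_contra hne'
    have hxy : x.1 ≠ y.1 := fun h => hne' (Subtype.ext h)
    obtain ⟨Hx, Hy, hHx, hHy, hdisj⟩ := disjoint_hulls hn hX hxy
    obtain ⟨B, hB, hBsub⟩ := h𝒱cof x.1 Hx hHx
    obtain ⟨C, hC, hCsub⟩ := h𝒱cof y.1 Hy hHy
    obtain ⟨α, hα⟩ := hgsurj x.1 ⟨B, hB⟩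
    obtain ⟨β, hβ⟩ := hgsurj y.1 ⟨C, hC⟩
    have h1 := (hF x α β).1
    have h2 := (hF y α β).1
    have heq : F x α β = F y α β := by
      have := congrFun (congrFun hxyF α) β
      exact congrArg Subtype.val this
    have hmemx : F x α β ∈ Hx := by
      have : F x α β ∈ (g x.1 α : Set X) := h1.1
      rw [hα] at this
      exact hBsub this
    have hmemy : F x α β ∈ Hy := by
      have : F y α β ∈ (g y.1 β : Set X) := h2.2
      rw [hβ] at this
      rw [heq]
      exact hCsub this
    have : F x α β ∈ Hx ∩ Hy := ⟨hmemx, hmemy⟩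
    rw [hdisj] at this
    exact this
  calc #(theta0Cl n A) ≤ #(κ.out → κ.out → ↥A) := Cardinal.mk_le_of_injective hinj
    _ = (#A ^ κ) ^ κ := by
        rw [← Cardinal.power_def, ← Cardinal.power_def, Cardinal.mk_out]
    _ = #A ^ (κ * κ) := Cardinal.power_mul.symm
    _ = #A ^ κ := by rw [Cardinal.mul_eq_self hκinf]
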